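/- Under the hypotheses of the main theorem, the family ℬ = {B_{α,β,Y} : α < χ_λ̄, β < χ_θ̄, Y ∈ E}, where B_{α,β,Y} = {ζ < λ : ∃ i ∈ Y (λ_{<i} ≤ ζ < λ_i ∧ ζ ∈ A_{i,g_β(i)} ∧ ζ > f_α(i))}, has the strong finite intersection property: every finite subfamily has intersection of cardinality λ. -/

import Mathlib

open Cardinal Set

/-- `U` is an ultrafilter on the set of ordinals `S`. -/
def IsUltrafilterOn (S : Set Ordinal.{0}) (U : Set (Set Ordinal.{0})) : Prop :=
  (∀ A ∈ U, A ⊆ S) ∧ S ∈ U ∧ ∅ ∉ U ∧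
    (∀ A ∈ U, ∀ B ∈ U, A ∩ B ∈ U) ∧
    (∀ A ∈ U, ∀ B, A ⊆ B → B ⊆ S → B ∈ U) ∧
    (∀ A, A ⊆ S → A ∈ U ∨ S \ A ∈ U)

/-- `s` has cardinality `< μ`. -/
def cardLT (s : Set Ordinal.{0}) (μ : Cardinal.{0}) : Prop := #s < Cardinal.lift.{1,0} μ

/-- `s` has cardinality `μ`. -/
def cardEQ (s : Set Ordinal.{0}) (μ : Cardinal.{0}) : Prop := #s = Cardinal.lift.{1,0} μ


/-- `λ_{<i} = sup{λ_j : j < i}` (as an ordinal). -/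
noncomputable def lamlt (lam_ : Ordinal.{0} → Cardinal.{0}) (i : Ordinal.{0}) : Ordinal.{0} :=
  sSup ((fun j => (lam_ j).ord) '' Set.Iio i)

/-- `B_{α,β,Y} = {ζ < λ : ∃ i ∈ Y (λ_{<i} ≤ ζ < λ_i ∧ ζ ∈ A_{i,g_β(i)} ∧ ζ > f_α(i))}`. -/
def Bset (lam_ : Ordinal.{0} → Cardinal.{0}) (A : Ordinal.{0} → Ordinal.{0} → Set Ordinal.{0})
    (f g : Ordinal.{0} → Ordinal.{0} → Ordinal.{0}) (α β : Ordinal.{0})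
    (Y : Set Ordinal.{0}) : Set Ordinal.{0} :=
  {ζ | ∃ i ∈ Y, lamlt lam_ i ≤ ζ ∧ ζ < (lam_ i).ord ∧ ζ ∈ A i (g β i) ∧ f α i < ζ}

lemma ultra_finite_inter {S : Set Ordinal.{0}} {U : Set (Set Ordinal.{0})}
    (hU : IsUltrafilterOn S U) : ∀ n : ℕ, ∀ C : Fin n → Set Ordinal.{0},
    (∀ k, C k ∈ U) → S ∩ ⋂ k, C k ∈ U := by
  intro n
  induction n with
  | zero => intro C _; simpa using hU.2.1
  | succ m ih =>
    intro C hC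
    have h1 : S ∩ ⋂ k : Fin m, C k.succ ∈ U := ih _ (fun k => hC k.succ)
    have h2 := hU.2.2.2.1 _ h1 _ (hC 0)
    have heq : (S ∩ ⋂ k : Fin m, C k.succ) ∩ C 0 = S ∩ ⋂ k, C k := by
      ext ζ
      simp only [Set.mem_inter_iff, Set.mem_iInter, Fin.forall_fin_succ]
      tauto
    rwa [heq] at h2

lemma mem_of_small_compl {c : Cardinal.{0}} {U : Set (Set Ordinal.{0})}
    (hU : IsUltrafilterOn (Set.Iio c.ord) U)
    (huni : ∀ X ∈ U, cardEQ X c) {B : Set Ordinal.{0}} (hB : B ⊆ Set.Iio c.ord)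
    (hsmall : #(↥(Set.Iio c.ord \ B)) < Cardinal.lift.{1,0} c) : B ∈ U := by
  rcases hU.2.2.2.2.2 B hB with h | h
  · exact h
  · exact absurd (huni _ h) hsmall.ne

lemma lamlt_lt {lam_ : Ordinal.{0} → Cardinal.{0}} {κ : Cardinal.{0}} {i : Ordinal.{0}}
    (hi : i < κ.ord) (hreg : (lam_ i).IsRegular) (hκ : κ ≤ lam_ i)
    (hmono : ∀ j, j < i → lam_ j < lam_ i) : lamlt lam_ i < (lam_ i).ord := by
  have heq : lamlt lam_ i = Ordinal.bsup i (fun j _ => (lam_ j).ord) := by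
    rw [lamlt, ← Ordinal.sSup_eq_bsup]
    congr 1
    ext x
    simp only [Set.mem_image, Set.mem_Iio, Ordinal.mem_brange]
    tauto
  rw [heq]
  refine Cardinal.bsup_lt_ord_of_isRegular hreg ?_ ?_
  · exact lt_of_lt_of_le (Cardinal.lt_ord.1 hi) hκ
  · intro j hj
    exact Cardinal.ord_lt_ord.2 (hmono j hj)

/-- under the hypotheses of the main theorem, the family
`ℬ = {B_{α,β,Y} : α < χ_λ̄, β < χ_θ̄, Y ∈ E}` has the strong finite intersection
property: every finite subfamily has intersection of cardinality `λ`. -/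
theorem stmt6 (lam κ χlam χθ : Cardinal.{0})
    (lam_ θ : Ordinal.{0} → Cardinal.{0})
    (E : Set (Set Ordinal.{0})) (U : Ordinal.{0} → Set (Set Ordinal.{0}))
    (A : Ordinal.{0} → Ordinal.{0} → Set Ordinal.{0})
    (f g : Ordinal.{0} → Ordinal.{0} → Ordinal.{0})
    -- (α) κ = cf(λ) < λ
    (hcof : lam.ord.cof = κ) (hκlt : κ < lam)
    -- (β) E is a uniform ultrafilter on κ
    (hE : IsUltrafilterOn (Set.Iio κ.ord) E)
    (hEuni : ∀ Y ∈ E, cardEQ Y κ)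
    -- (γ) λ is a strong limit cardinal
    (hsl : lam.IsStrongLimit)
    -- (δ) ⟨λ_i : i < κ⟩ strictly increasing regular cardinals tending to λ
    (hreg : ∀ i < κ.ord, (lam_ i).IsRegular)
    (hmono : ∀ i j, i < j → j < κ.ord → lam_ i < lam_ j)
    (hlt : ∀ i < κ.ord, lam_ i < lam)
    (hcofinal : ∀ c < lam, ∃ i < κ.ord, c ≤ lam_ i)
    -- (ε) U_i is a uniform ultrafilter on λ_i
    (hU : ∀ i < κ.ord, IsUltrafilterOn (Set.Iio (lam_ i).ord) (U i))
    (hUuni : ∀ i < κ.ord, ∀ X ∈ U i, cardEQ X (lam_ i))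
    -- (ζ) U_i is generated by the ⊆*-decreasing sequence ⟨A i α : α < θ i⟩
    (hAmem : ∀ i < κ.ord, ∀ α < (θ i).ord, A i α ∈ U i)
    (hAdec : ∀ i < κ.ord, ∀ α α', α < α' → α' < (θ i).ord →
      cardLT (A i α' \ A i α) (lam_ i))
    (hAgen : ∀ i < κ.ord, ∀ B ∈ U i, ∃ α < (θ i).ord, cardLT (A i α \ B) (lam_ i))
    -- (η) χ_λ̄ = tcf(∏ λ_i, <_E) and χ_θ̄ = tcf(∏ θ_i, <_E), witnessed by scales
    (hχlam : χlam.IsRegular) (hχθ : χθ.IsRegular)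
    (hf : ∀ α < χlam.ord, ∀ i < κ.ord, f α i < (lam_ i).ord)
    (hfinc : ∀ α α', α < α' → α' < χlam.ord → {i | i < κ.ord ∧ f α i < f α' i} ∈ E)
    (hfcof : ∀ h : Ordinal.{0} → Ordinal.{0}, (∀ i < κ.ord, h i < (lam_ i).ord) →
      ∃ α < χlam.ord, {i | i < κ.ord ∧ h i < f α i} ∈ E)
    (hg : ∀ β < χθ.ord, ∀ i < κ.ord, g β i < (θ i).ord)
    (hginc : ∀ β β', β < β' → β' < χθ.ord → {i | i < κ.ord ∧ g β i < g β' i} ∈ E)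
    (hgcof : ∀ h : Ordinal.{0} → Ordinal.{0}, (∀ i < κ.ord, h i < (θ i).ord) →
      ∃ β < χθ.ord, {i | i < κ.ord ∧ h i < g β i} ∈ E) :
    ∀ n : ℕ, ∀ p : Fin n → Ordinal.{0} × Ordinal.{0} × Set Ordinal.{0},
      (∀ k, (p k).1 < χlam.ord ∧ (p k).2.1 < χθ.ord ∧ (p k).2.2 ∈ E) →
      cardEQ (Set.Iio lam.ord ∩ ⋂ k, Bset lam_ A f g (p k).1 (p k).2.1 (p k).2.2) lam := by
  intro n p hp
  have hallam : ℵ₀ ≤ lam := hsl.aleph0_le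
  have halkap : ℵ₀ ≤ κ := by
    rw [← hcof]; exact Ordinal.aleph0_le_cof.2 (Cardinal.isSuccLimit_ord hallam)
  set X := Set.Iio lam.ord ∩ ⋂ k, Bset lam_ A f g (p k).1 (p k).2.1 (p k).2.2 with hXdef
  have hXle : #X ≤ Cardinal.lift.{1,0} lam := by
    calc #X ≤ #(Set.Iio lam.ord) := Cardinal.mk_le_mk_of_subset Set.inter_subset_left
    _ = Cardinal.lift.{1,0} lam := by rw [Ordinal.mk_Iio_ordinal, Cardinal.card_ord]
  set Y := Set.Iio κ.ord ∩ ⋂ k, (p k).2.2 with hYdef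
  have hYE : Y ∈ E := ultra_finite_inter hE n _ (fun k => (hp k).2.2)
  have hYunb : ∀ b < κ.ord, ∃ i ∈ Y, b < i := by
    intro b hb
    by_contra hcon
    push_neg at hcon
    have hsub : Y ⊆ Set.Iio (Order.succ b) := fun i hi =>
      Order.lt_succ_iff.2 (hcon i hi)
    have h1 : #Y ≤ Cardinal.lift.{1,0} (Order.succ b).card :=
      (Cardinal.mk_le_mk_of_subset hsub).trans_eq (Ordinal.mk_Iio_ordinal _)
    rw [hEuni Y hYE, Cardinal.lift_le] at h1
    exact absurd h1 (not_le.2 (Cardinal.lt_ord.1 ((Cardinal.isSuccLimit_ord halkap).succ_lt hb)))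
  obtain ⟨istar, histar, hkls⟩ := hcofinal κ hκlt
  have claim : ∀ μ : Cardinal.{0}, μ < lam → Cardinal.lift.{1,0} μ ≤ #X := by
    intro μ hμ
    obtain ⟨i1, hi1, hml1⟩ := hcofinal μ hμ
    obtain ⟨i, hiY, hbi⟩ := hYunb (max i1 istar) (max_lt hi1 histar)
    have hiκ : i < κ.ord := hiY.1
    have hregi := hreg i hiκ
    have hkli : κ ≤ lam_ i :=
      hkls.trans (hmono istar i ((le_max_right _ _).trans_lt hbi) hiκ).le
    have hmli : μ ≤ lam_ i :=
      hml1.trans (hmono i1 i ((le_max_left _ _).trans_lt hbi) hiκ).le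
    have hgood : lamlt lam_ i < (lam_ i).ord :=
      lamlt_lt hiκ hregi hkli (fun j hj => hmono j i hj hiκ)
    have hordlim : Order.IsSuccLimit ((lam_ i).ord) := Cardinal.isSuccLimit_ord hregi.aleph0_le
    set m : Ordinal := max (lamlt lam_ i) (Finset.univ.sup fun k => f (p k).1 i) with hmdef
    have hmlt : m < (lam_ i).ord := by
      refine max_lt hgood (Finset.sup_lt_iff hordlim.pos |>.2 ?_)
      intro k _
      exact hf (p k).1 (hp k).1 i hiκ
    set T : Set Ordinal.{0} :=
      Set.Ioo m (lam_ i).ord ∩ (Set.Iio (lam_ i).ord ∩ ⋂ k, A i (g (p k).2.1 i)) with hTdef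
    have hIoo : Set.Ioo m (lam_ i).ord ∈ U i := by
      refine mem_of_small_compl (hU i hiκ) (hUuni i hiκ) (fun x hx => hx.2) ?_
      have hsub : Set.Iio (lam_ i).ord \ Set.Ioo m (lam_ i).ord ⊆ Set.Iio (Order.succ m) := by
        rintro ζ ⟨h1, h2⟩
        simp only [Set.mem_Ioo, not_and, not_lt] at h2
        rw [Set.mem_Iio, Order.lt_succ_iff]
        by_contra hc
        push_neg at hc
        exact absurd h1 (not_lt.2 (h2 hc))
      calc #(↥(Set.Iio (lam_ i).ord \ Set.Ioo m (lam_ i).ord))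
          ≤ #(Set.Iio (Order.succ m)) := Cardinal.mk_le_mk_of_subset hsub
        _ = Cardinal.lift.{1,0} (Order.succ m).card := Ordinal.mk_Iio_ordinal _
        _ < Cardinal.lift.{1,0} (lam_ i) := by
            rw [Cardinal.lift_lt]
            exact Cardinal.lt_ord.1 (hordlim.succ_lt hmlt)
    have hAint : Set.Iio (lam_ i).ord ∩ ⋂ k, A i (g (p k).2.1 i) ∈ U i :=
      ultra_finite_inter (hU i hiκ) n _
        (fun k => hAmem i hiκ _ (hg (p k).2.1 (hp k).2.1 i hiκ))
    have hTU : T ∈ U i := (hU i hiκ).2.2.2.1 _ hIoo _ hAint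
    have hTcard : #T = Cardinal.lift.{1,0} (lam_ i) := hUuni i hiκ T hTU
    have hTX : T ⊆ X := by
      rintro ζ ⟨⟨hmζ, hζord⟩, -, hζA⟩
      refine ⟨hζord.trans (Cardinal.ord_lt_ord.2 (hlt i hiκ)), ?_⟩
      rw [Set.mem_iInter]
      intro k
      refine ⟨i, (Set.mem_iInter.1 hiY.2) k, ((le_max_left _ _).trans hmζ.le), hζord,
        Set.mem_iInter.1 hζA k, ?_⟩
      have hfle : f (p k).1 i ≤ m :=
        le_trans (Finset.le_sup (f := fun k => f (p k).1 i) (Finset.mem_univ k))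
          (le_max_right _ _)
      exact lt_of_le_of_lt hfle hmζ
    calc Cardinal.lift.{1,0} μ ≤ Cardinal.lift.{1,0} (lam_ i) := Cardinal.lift_le.2 hmli
      _ = #T := hTcard.symm
      _ ≤ #X := Cardinal.mk_le_mk_of_subset hTX
  obtain ⟨ν, hν⟩ := Cardinal.mem_range_lift_of_le hXle
  rw [cardEQ, ← hν, Cardinal.lift_inj]
  have hνle : ν ≤ lam := by rw [← Cardinal.lift_le.{1,0}, hν]; exact hXle
  rcases hνle.lt_or_eq with hlt' | heq
  · exfalso
    have h2 := claim (Order.succ ν) (hsl.isSuccLimit.succ_lt hlt')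
    rw [← hν, Cardinal.lift_le] at h2
    exact (Order.lt_succ ν).not_ge h2
  · exact heq
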